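/- The recoverable robust shortest path problem min over X in Φ of (Σ_{e∈X} C_e + max over S in U of min over Y in Φ(X,k) of Σ_{e∈Y} c_e^S) has the same optimal value as the recoverable shortest path problem min over X in Φ and Y in Φ(X,k) of (Σ_{e∈X} C_e + Σ_{e∈Y} c̄_e), where c̄_e = ĉ_e + Δ_e. -/

import Mathlib

/-- The recoverable robust shortest path problem
`min_{X∈Φ} (Σ_{e∈X} C_e + max_{S∈U} min_{Y∈Φ(X,k)} Σ_{e∈Y} c_e^S)`
has the same optimal value as the recoverable shortest path problem
`min_{X∈Φ, Y∈Φ(X,k)} (Σ_{e∈X} C_e + Σ_{e∈Y} (ĉ_e + Δ_e))`. -/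
theorem rob_rec_sp_eq_rec_sp
    {α : Type*} [DecidableEq α]
    (C chat Δ : α → ℝ) (hC : ∀ e, 0 ≤ C e)
    (hchat : ∀ e, 0 ≤ chat e) (hΔ : ∀ e, 0 ≤ Δ e)
    (Φ : Finset (Finset α)) (hΦ : Φ.Nonempty) (k : ℕ)
    (hnbhd : ∀ X ∈ Φ, ∃ Y ∈ Φ, (Y \ X).card ≤ k) :
    sInf {v : ℝ | ∃ X ∈ Φ,
        v = (∑ e ∈ X, C e) +
          sSup {w : ℝ | ∃ c : α → ℝ,
            (∀ e, chat e ≤ c e ∧ c e ≤ chat e + Δ e) ∧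
            w = sInf {z : ℝ | ∃ Y ∈ Φ, (Y \ X).card ≤ k ∧
                  z = ∑ e ∈ Y, c e}}} =
    sInf {v : ℝ | ∃ X ∈ Φ, ∃ Y ∈ Φ, (Y \ X).card ≤ k ∧
        v = (∑ e ∈ X, C e) + ∑ e ∈ Y, (chat e + Δ e)} := by
  set cbar : α → ℝ := fun e => chat e + Δ e with hcbar
  -- the inner feasible-value set for a given X and cost c
  set Z : Finset α → (α → ℝ) → Set ℝ := fun X c =>
    {z : ℝ | ∃ Y ∈ Φ, (Y \ X).card ≤ k ∧ z = ∑ e ∈ Y, c e} with hZ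
  have hZfin : ∀ X c, (Z X c).Finite := by
    intro X c
    apply Set.Finite.subset (Φ.finite_toSet.image (fun Y => ∑ e ∈ Y, c e))
    rintro z ⟨Y, hY, _, rfl⟩
    exact ⟨Y, hY, rfl⟩
  have hZne : ∀ X ∈ Φ, ∀ c, (Z X c).Nonempty := by
    intro X hX c
    obtain ⟨Y, hY, hk⟩ := hnbhd X hX
    exact ⟨_, Y, hY, hk, rfl⟩
  have hZbdd : ∀ X c, BddBelow (Z X c) := fun X c => (hZfin X c).bddBelow
  -- the sup over the uncertainty box collapses to cbar
  have hsup : ∀ X ∈ Φ,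
      sSup {w : ℝ | ∃ c : α → ℝ,
          (∀ e, chat e ≤ c e ∧ c e ≤ chat e + Δ e) ∧
          w = sInf (Z X c)} = sInf (Z X cbar) := by
    intro X hX
    apply IsGreatest.csSup_eq
    constructor
    · exact ⟨cbar, fun e => ⟨le_add_of_nonneg_right (hΔ e), le_refl _⟩, rfl⟩
    · rintro w ⟨c, hc, rfl⟩
      obtain ⟨Y, hY, hk, hval⟩ := ((hZne X hX cbar).csInf_mem (hZfin X cbar))
      rw [hval]
      calc sInf (Z X c) ≤ ∑ e ∈ Y, c e := csInf_le (hZbdd X c) ⟨Y, hY, hk, rfl⟩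
        _ ≤ ∑ e ∈ Y, cbar e := Finset.sum_le_sum fun e _ => (hc e).2
  -- rewrite the LHS set
  have hset : {v : ℝ | ∃ X ∈ Φ,
      v = (∑ e ∈ X, C e) +
        sSup {w : ℝ | ∃ c : α → ℝ,
          (∀ e, chat e ≤ c e ∧ c e ≤ chat e + Δ e) ∧
          w = sInf {z : ℝ | ∃ Y ∈ Φ, (Y \ X).card ≤ k ∧
                z = ∑ e ∈ Y, c e}}} =
      {v : ℝ | ∃ X ∈ Φ, v = (∑ e ∈ X, C e) + sInf (Z X cbar)} := by
    ext v
    constructor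
    · rintro ⟨X, hX, rfl⟩
      exact ⟨X, hX, by rw [hsup X hX]⟩
    · rintro ⟨X, hX, rfl⟩
      exact ⟨X, hX, by rw [hsup X hX]⟩
  rw [hset]
  set A : Set ℝ := {v : ℝ | ∃ X ∈ Φ, v = (∑ e ∈ X, C e) + sInf (Z X cbar)} with hA
  set B : Set ℝ := {v : ℝ | ∃ X ∈ Φ, ∃ Y ∈ Φ, (Y \ X).card ≤ k ∧
      v = (∑ e ∈ X, C e) + ∑ e ∈ Y, cbar e} with hB
  have hAne : A.Nonempty := by
    obtain ⟨X, hX⟩ := hΦ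
    exact ⟨_, X, hX, rfl⟩
  have hBne : B.Nonempty := by
    obtain ⟨X, hX⟩ := hΦ
    obtain ⟨Y, hY, hk⟩ := hnbhd X hX
    exact ⟨_, X, hX, Y, hY, hk, rfl⟩
  have hcbar_nonneg : ∀ e, (0:ℝ) ≤ cbar e := fun e => add_nonneg (hchat e) (hΔ e)
  have hAbdd : BddBelow A := by
    refine ⟨0, ?_⟩
    rintro v ⟨X, hX, rfl⟩
    have h1 : (0:ℝ) ≤ ∑ e ∈ X, C e := Finset.sum_nonneg fun e _ => hC e
    have h2 : (0:ℝ) ≤ sInf (Z X cbar) := by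
      apply le_csInf (hZne X hX cbar)
      rintro z ⟨Y, hY, hk, rfl⟩
      exact Finset.sum_nonneg fun e _ => hcbar_nonneg e
    linarith
  have hBbdd : BddBelow B := by
    refine ⟨0, ?_⟩
    rintro v ⟨X, hX, Y, hY, hk, rfl⟩
    have h1 : (0:ℝ) ≤ ∑ e ∈ X, C e := Finset.sum_nonneg fun e _ => hC e
    have h2 : (0:ℝ) ≤ ∑ e ∈ Y, cbar e := Finset.sum_nonneg fun e _ => hcbar_nonneg e
    linarith
  apply le_antisymm
  · apply le_csInf hBne
    rintro b ⟨X, hX, Y, hY, hk, rfl⟩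
    calc sInf A ≤ (∑ e ∈ X, C e) + sInf (Z X cbar) := csInf_le hAbdd ⟨X, hX, rfl⟩
      _ ≤ (∑ e ∈ X, C e) + ∑ e ∈ Y, cbar e :=
        add_le_add le_rfl (csInf_le (hZbdd X cbar) ⟨Y, hY, hk, rfl⟩)
  · apply le_csInf hAne
    rintro a ⟨X, hX, rfl⟩
    obtain ⟨Y, hY, hk, hval⟩ := ((hZne X hX cbar).csInf_mem (hZfin X cbar))
    rw [hval]
    exact csInf_le hBbdd ⟨X, hX, Y, hY, hk, rfl⟩
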